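/- arXiv:1810.12590 — 5 statements merged into one kernel-verified Lean document; each statement's English description precedes it below -/
import Mathlib

section
/- Let $A \in \mathbb{R}^{n\times n}$ be invertible, $B \in \mathbb{R}^{n\times m}$, and $P \in \mathbb{R}^{n\times n}$ be symmetric positive semidefinite. Then the closed-loop matrix $A_{cl} = A - B(B^T P B + I)^{-1} B^T P A$ is invertible, and moreover $\det(A_{cl}) = \det(A)/\det(B^T P B + I)$. -/
open Matrix

theorem stmt0 {n m : ℕ} (A : Matrix (Fin n) (Fin n) ℝ) (B : Matrix (Fin n) (Fin m) ℝ)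
    (P : Matrix (Fin n) (Fin n) ℝ) (hA : IsUnit A.det) (hP : P.PosSemidef) :
    IsUnit (A - B * (Bᵀ * P * B + 1)⁻¹ * Bᵀ * P * A).det ∧
    (A - B * (Bᵀ * P * B + 1)⁻¹ * Bᵀ * P * A).det = A.det / (Bᵀ * P * B + 1).det := by
  have hsemi : (Bᵀ * P * B).PosSemidef := by
    have := hP.conjTranspose_mul_mul_same B
    simpa using this
  have hM : (Bᵀ * P * B + 1).PosDef := Matrix.PosDef.posSemidef_add hsemi Matrix.PosDef.one
  have hMd : (Bᵀ * P * B + 1).det ≠ 0 := hM.det_pos.ne'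
  have hMu : IsUnit (Bᵀ * P * B + 1).det := hMd.isUnit
  set M := Bᵀ * P * B + 1 with hMdef
  have hfact : A - B * M⁻¹ * Bᵀ * P * A = (1 - B * (M⁻¹ * Bᵀ * P)) * A := by
    rw [Matrix.sub_mul, Matrix.one_mul]
    simp only [Matrix.mul_assoc]
  have hinv : M⁻¹ * M = 1 := Matrix.nonsing_inv_mul M hMu
  have hdet : (A - B * M⁻¹ * Bᵀ * P * A).det = A.det / M.det := by
    rw [hfact, Matrix.det_mul, Matrix.det_one_sub_mul_comm]
    have : (1 : Matrix (Fin m) (Fin m) ℝ) - M⁻¹ * Bᵀ * P * B = M⁻¹ := by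
      have h2 : M⁻¹ * Bᵀ * P * B = M⁻¹ * (Bᵀ * P * B) := by
        simp only [Matrix.mul_assoc]
      rw [h2, ← hinv, hMdef, Matrix.mul_add, Matrix.mul_one]
      abel
    rw [this, Matrix.det_nonsing_inv]
    rw [Ring.inverse_eq_inv]
    field_simp [Ring.inverse_eq_inv]
  refine ⟨?_, hdet⟩
  rw [hdet]
  exact isUnit_iff_ne_zero.mpr (div_ne_zero (hA.ne_zero) hMd)
end

section
/- Consider the discrete-time Riccati recursion on horizon $N$: $P_N = 0$ and $P_t = A^T P_{t+1} A + Q - A^T P_{t+1} B (B^T P_{t+1} B + I)^{-1} B^T P_{t+1} A$ for $t = N-1, \ldots, 2$, with feedback gains $K_t = -(B^T P_{t+1} B + I)^{-1} B^T P_{t+1} A$. Suppose $A$ is invertible, $B$ has full column rank, $(A,B)$ is controllable, and $N \geq n+2$. If $Q, Q' \succeq 0$ are two positive semidefinite matrices whose Riccati recursions produce identical closed-loop matrices $A + BK_t = A + BK'_t$ for all $t = 1, \ldots, N-1$, then $Q = Q'$. -/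
open Matrix

section Aux

lemma inj_of_rank {a b : Type*} [Fintype a] [Fintype b] [DecidableEq b]
    (C : Matrix a b ℝ) (h : C.rank = Fintype.card b) :
    Function.Injective C.mulVecLin := by
  rw [← LinearMap.ker_eq_bot, ← Submodule.finrank_eq_zero]
  have := LinearMap.finrank_range_add_finrank_ker C.mulVecLin
  rw [Module.finrank_pi] at this
  have hr : Module.finrank ℝ ↥(LinearMap.range C.mulVecLin) = Fintype.card b := by
    rw [← h]; rfl
  omega

lemma left_cancel {a b c : Type*} [Fintype a] [Fintype b] [Fintype c] [DecidableEq b]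
    (C : Matrix a b ℝ) (h : Function.Injective C.mulVecLin)
    (X Y : Matrix b c ℝ) (hXY : C * X = C * Y) : X = Y := by
  ext i j
  have : C.mulVecLin (fun k => X k j) = C.mulVecLin (fun k => Y k j) := by
    ext l
    have := congrFun (congrFun hXY l) j
    simpa [Matrix.mul_apply, mulVecLin_apply, Matrix.mulVec, dotProduct] using this
  have := congrFun (h this) i
  simpa using this

lemma cancel_right {k : ℕ} {c : Type*} [Fintype c]
    (M : Matrix (Fin k) (Fin k) ℝ) (hu : IsUnit M.det)
    (X Y : Matrix c (Fin k) ℝ) (h : X * M = Y * M) : X = Y := by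
  have := congrArg (· * M⁻¹) h
  simpa [Matrix.mul_assoc, Matrix.mul_nonsing_inv _ hu] using this

variable {n m : ℕ}

lemma S_posdef (P : Matrix (Fin n) (Fin n) ℝ) (B : Matrix (Fin n) (Fin m) ℝ)
    (hP : P.PosSemidef) : (Bᵀ * P * B + 1).PosDef := by
  have h1 : (Bᵀ * P * B).PosSemidef := by
    have := hP.conjTranspose_mul_mul_same B
    simpa using this
  simpa [add_comm] using (Matrix.PosDef.one (n := Fin m) (R := ℝ)).add_posSemidef h1

lemma key_identity (A P : Matrix (Fin n) (Fin n) ℝ) (B : Matrix (Fin n) (Fin m) ℝ)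
    (hP : P.PosSemidef) :
    Aᵀ * P * A - Aᵀ * P * B * (Bᵀ * P * B + 1)⁻¹ * Bᵀ * P * A =
      (A + B * (-(Bᵀ * P * B + 1)⁻¹ * Bᵀ * P * A))ᵀ * P * (A + B * (-(Bᵀ * P * B + 1)⁻¹ * Bᵀ * P * A))
      + (-(Bᵀ * P * B + 1)⁻¹ * Bᵀ * P * A)ᵀ * (-(Bᵀ * P * B + 1)⁻¹ * Bᵀ * P * A) := by
  set S := Bᵀ * P * B + 1 with hSdef
  have hSd : IsUnit S.det := (Matrix.isUnit_iff_isUnit_det _).mp (S_posdef P B hP).isUnit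
  have hPt : Pᵀ = P := by
    have := hP.isHermitian
    simpa [Matrix.IsHermitian] using this
  have hSt : Sᵀ = S := by
    rw [hSdef]
    simp [Matrix.transpose_mul, Matrix.mul_assoc, hPt]
  have hTt : S⁻¹ᵀ = S⁻¹ := by rw [Matrix.transpose_nonsing_inv, hSt]
  have hTS : ∀ X : Matrix (Fin m) (Fin n) ℝ, S⁻¹ * (S * X) = X := by
    intro X; rw [← Matrix.mul_assoc, Matrix.nonsing_inv_mul _ hSd, Matrix.one_mul]
  have hexp : ∀ X : Matrix (Fin m) (Fin n) ℝ, Bᵀ * (P * (B * X)) = S * X - X := by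
    intro X
    rw [← Matrix.mul_assoc, ← Matrix.mul_assoc]
    rw [show Bᵀ * P * B = S - 1 by rw [hSdef]; abel]
    rw [Matrix.sub_mul, Matrix.one_mul]
  simp only [Matrix.transpose_add, Matrix.transpose_mul, Matrix.transpose_neg, hPt, hTt,
    Matrix.transpose_transpose, Matrix.add_mul, Matrix.mul_add, Matrix.neg_mul, Matrix.mul_neg,
    Matrix.mul_assoc, hexp, Matrix.mul_sub, hTS, Matrix.sub_mul]
  abel

lemma psd_step (A P Q : Matrix (Fin n) (Fin n) ℝ) (B : Matrix (Fin n) (Fin m) ℝ)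
    (hP : P.PosSemidef) (hQ : Q.PosSemidef) :
    (Aᵀ * P * A + Q - Aᵀ * P * B * (Bᵀ * P * B + 1)⁻¹ * Bᵀ * P * A).PosSemidef := by
  have h := key_identity A P B hP
  set K := -(Bᵀ * P * B + 1)⁻¹ * Bᵀ * P * A with hK
  have : Aᵀ * P * A + Q - Aᵀ * P * B * (Bᵀ * P * B + 1)⁻¹ * Bᵀ * P * A
      = ((A + B * K)ᵀ * P * (A + B * K) + Kᵀ * K) + Q := by
    rw [← h]; abel
  rw [this]
  refine Matrix.PosSemidef.add (Matrix.PosSemidef.add ?_ ?_) hQ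
  · simpa using hP.conjTranspose_mul_mul_same (A + B * K)
  · simpa using Matrix.posSemidef_conjTranspose_mul_self K

lemma gain_identity (A P : Matrix (Fin n) (Fin n) ℝ) (B : Matrix (Fin n) (Fin m) ℝ)
    (hP : P.PosSemidef) :
    Bᵀ * P * (A + B * (-(Bᵀ * P * B + 1)⁻¹ * Bᵀ * P * A))
      = -(-(Bᵀ * P * B + 1)⁻¹ * Bᵀ * P * A) := by
  set S := Bᵀ * P * B + 1 with hSdef
  have hSd : IsUnit S.det := (Matrix.isUnit_iff_isUnit_det _).mp (S_posdef P B hP).isUnit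
  set K := -S⁻¹ * Bᵀ * P * A with hK
  have hSK : S * K = -(Bᵀ * P * A) := by
    rw [hK]
    rw [show -S⁻¹ * Bᵀ * P * A = -(S⁻¹ * (Bᵀ * P * A)) by
      simp [Matrix.neg_mul, Matrix.mul_assoc]]
    rw [Matrix.mul_neg, ← Matrix.mul_assoc, Matrix.mul_nonsing_inv _ hSd, Matrix.one_mul]
  calc Bᵀ * P * (A + B * K) = Bᵀ * P * A + (Bᵀ * P * B) * K := by
        rw [Matrix.mul_add, Matrix.mul_assoc, ← Matrix.mul_assoc, ← Matrix.mul_assoc]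
    _ = Bᵀ * P * A + (S - 1) * K := by rw [show Bᵀ * P * B = S - 1 by rw [hSdef]; abel]
    _ = Bᵀ * P * A + S * K - K := by rw [Matrix.sub_mul, Matrix.one_mul]; abel
    _ = -K := by rw [hSK]; abel

lemma acl_unit (A P : Matrix (Fin n) (Fin n) ℝ) (B : Matrix (Fin n) (Fin m) ℝ)
    (hP : P.PosSemidef) (hA : IsUnit A.det) :
    IsUnit (A + B * (-(Bᵀ * P * B + 1)⁻¹ * Bᵀ * P * A)).det := by
  set S := Bᵀ * P * B + 1 with hSdef
  have hSd : IsUnit S.det := (Matrix.isUnit_iff_isUnit_det _).mp (S_posdef P B hP).isUnit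
  have hfact : A + B * (-S⁻¹ * Bᵀ * P * A) = (1 + (-(B * S⁻¹)) * (Bᵀ * P)) * A := by
    simp [Matrix.add_mul, Matrix.mul_assoc, Matrix.neg_mul, Matrix.mul_neg]
  rw [hfact, Matrix.det_mul, Matrix.det_one_add_mul_comm]
  have : 1 + Bᵀ * P * -(B * S⁻¹) = S⁻¹ := by
    rw [Matrix.mul_neg, ← Matrix.mul_assoc]
    rw [show Bᵀ * P * B = S - 1 by rw [hSdef]; abel]
    rw [Matrix.sub_mul, Matrix.one_mul, Matrix.mul_nonsing_inv _ hSd]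
    abel
  rw [this, Matrix.det_nonsing_inv]
  exact (isUnit_ringInverse.mpr hSd).mul hA

end Aux

theorem stmt4 {n m : ℕ} (A : Matrix (Fin n) (Fin n) ℝ) (B : Matrix (Fin n) (Fin m) ℝ)
    (hA : IsUnit A.det) (hB : B.rank = m)
    (hctrb : (Matrix.of fun i (kj : Fin n × Fin m) => (A ^ (kj.1 : ℕ) * B) i kj.2).rank = n)
    (N : ℕ) (hN : n + 2 ≤ N)
    (Q Q' : Matrix (Fin n) (Fin n) ℝ) (hQ : Q.PosSemidef) (hQ' : Q'.PosSemidef)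
    (P P' : ℕ → Matrix (Fin n) (Fin n) ℝ)
    (hPN : P N = 0) (hP'N : P' N = 0)
    (hric : ∀ t, 2 ≤ t → t ≤ N - 1 →
      P t = Aᵀ * P (t+1) * A + Q - Aᵀ * P (t+1) * B * (Bᵀ * P (t+1) * B + 1)⁻¹ * Bᵀ * P (t+1) * A)
    (hric' : ∀ t, 2 ≤ t → t ≤ N - 1 →
      P' t = Aᵀ * P' (t+1) * A + Q' - Aᵀ * P' (t+1) * B * (Bᵀ * P' (t+1) * B + 1)⁻¹ * Bᵀ * P' (t+1) * A)
    (hcl : ∀ t, 1 ≤ t → t ≤ N - 1 →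
      A + B * (-(Bᵀ * P (t+1) * B + 1)⁻¹ * Bᵀ * P (t+1) * A)
        = A + B * (-(Bᵀ * P' (t+1) * B + 1)⁻¹ * Bᵀ * P' (t+1) * A)) :
    Q = Q' := by
  rcases Nat.eq_zero_or_pos n with hn0 | hn
  · subst hn0; ext i j; exact i.elim0
  have hN3 : 3 ≤ N := by omega
  -- positive semidefiniteness of P t, P' t for 2 ≤ t ≤ N
  have hPsdAux : ∀ k, k ≤ N - 2 → (P (N - k)).PosSemidef ∧ (P' (N - k)).PosSemidef := by
    intro k
    induction k with
    | zero =>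
      intro _
      simp only [Nat.sub_zero, hPN, hP'N]
      exact ⟨Matrix.PosSemidef.zero, Matrix.PosSemidef.zero⟩
    | succ k ih =>
      intro hk
      obtain ⟨h1, h2⟩ := ih (by omega)
      have ht : N - (k+1) + 1 = N - k := by omega
      have h2le : 2 ≤ N - (k+1) := by omega
      have hle : N - (k+1) ≤ N - 1 := by omega
      constructor
      · rw [hric _ h2le hle, ht]; exact psd_step A (P (N-k)) Q B h1 hQ
      · rw [hric' _ h2le hle, ht]; exact psd_step A (P' (N-k)) Q' B h2 hQ'
  have hPsdT : ∀ t, 2 ≤ t → t ≤ N → (P t).PosSemidef ∧ (P' t).PosSemidef := by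
    intro t h2 hle
    have h := hPsdAux (N - t) (by omega)
    rwa [show N - (N - t) = t by omega] at h
  -- B has injective mulVecLin
  have hBinj : Function.Injective B.mulVecLin :=
    inj_of_rank B (by simpa using hB)
  -- B^T P s = B^T P' s for 2 ≤ s ≤ N - 1 (and trivially at N)
  have hBD : ∀ s, 2 ≤ s → s ≤ N → Bᵀ * P s = Bᵀ * P' s := by
    intro s h2 h3
    rcases Nat.lt_or_ge s N with hsN | hsN
    · obtain ⟨hpsd, hpsd'⟩ := hPsdT s h2 (by omega)
      have hc := hcl (s - 1) (by omega) (by omega)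
      rw [show s - 1 + 1 = s by omega] at hc
      have hKeq : (-(Bᵀ * P s * B + 1)⁻¹ * Bᵀ * P s * A)
          = (-(Bᵀ * P' s * B + 1)⁻¹ * Bᵀ * P' s * A) :=
        left_cancel B hBinj _ _ (by linear_combination (norm := abel) hc)
      have hg := gain_identity A (P s) B hpsd
      have hg' := gain_identity A (P' s) B hpsd'
      rw [← hKeq] at hg'
      have hu := acl_unit A (P s) B hpsd hA
      exact cancel_right _ hu _ _ (hg.trans hg'.symm)
    · have : s = N := by omega
      rw [this, hPN, hP'N]
  -- difference recursion
  have hDrec : ∀ t, 2 ≤ t → t ≤ N - 1 →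
      P t - P' t = Aᵀ * (P (t+1) - P' (t+1)) * A + (Q - Q') := by
    intro t h2 h3
    have hM : Bᵀ * P (t+1) = Bᵀ * P' (t+1) := hBD (t+1) (by omega) (by omega)
    have hPt : (P (t+1))ᵀ = P (t+1) := by
      have := (hPsdT (t+1) (by omega) (by omega)).1.isHermitian
      simpa [Matrix.IsHermitian] using this
    have hPt' : (P' (t+1))ᵀ = P' (t+1) := by
      have := (hPsdT (t+1) (by omega) (by omega)).2.isHermitian
      simpa [Matrix.IsHermitian] using this
    have hMB : P (t+1) * B = P' (t+1) * B := by
      calc P (t+1) * B = (Bᵀ * P (t+1))ᵀ := by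
            rw [Matrix.transpose_mul, Matrix.transpose_transpose, hPt]
        _ = (Bᵀ * P' (t+1))ᵀ := by rw [hM]
        _ = P' (t+1) * B := by rw [Matrix.transpose_mul, Matrix.transpose_transpose, hPt']
    have e1 : Aᵀ * P (t+1) * B = Aᵀ * P' (t+1) * B := by
      rw [Matrix.mul_assoc, hMB, ← Matrix.mul_assoc]
    have e2 : Bᵀ * P (t+1) * B = Bᵀ * P' (t+1) * B := by rw [hM]
    have hsub : Aᵀ * P (t+1) * B * (Bᵀ * P (t+1) * B + 1)⁻¹ * Bᵀ * P (t+1) * A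
        = Aᵀ * P' (t+1) * B * (Bᵀ * P' (t+1) * B + 1)⁻¹ * Bᵀ * P' (t+1) * A := by
      rw [e1, e2, Matrix.mul_assoc _ Bᵀ (P (t+1)), hM, ← Matrix.mul_assoc]
    rw [hric t h2 h3, hric' t h2 h3, hsub, Matrix.mul_sub, Matrix.sub_mul]
    abel
  -- explicit sum formula
  have hDsum : ∀ j, j ≤ N - 3 →
      P (N-1-j) - P' (N-1-j) = ∑ k ∈ Finset.range (j+1), (Aᵀ)^k * (Q - Q') * A^k := by
    intro j
    induction j with
    | zero =>
      intro _
      have h := hDrec (N-1) (by omega) (by omega)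
      rw [show N - 1 + 1 = N by omega, hPN, hP'N] at h
      simpa using h
    | succ j ih =>
      intro hj
      have h := hDrec (N-1-(j+1)) (by omega) (by omega)
      rw [show N-1-(j+1)+1 = N-1-j by omega, ih (by omega)] at h
      rw [h]
      rw [Finset.sum_range_succ' (fun k => (Aᵀ)^k * (Q - Q') * A^k) (j+1)]
      rw [Matrix.mul_sum, Finset.sum_mul]
      congr 1
      · apply Finset.sum_congr rfl
        intro k _
        rw [pow_succ A, pow_succ' Aᵀ]
        simp only [Matrix.mul_assoc]
      · simp
  -- individual terms vanish against B^T
  have hBsum : ∀ j, j ≤ N - 3 →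
      Bᵀ * (∑ k ∈ Finset.range (j+1), (Aᵀ)^k * (Q - Q') * A^k) = 0 := by
    intro j hj
    rw [← hDsum j hj, Matrix.mul_sub]
    rw [hBD (N-1-j) (by omega) (by omega)]
    abel
  have hterm : ∀ j, j ≤ N - 3 → Bᵀ * ((Aᵀ)^j * (Q - Q') * A^j) = 0 := by
    intro j hj
    match j with
    | 0 => simpa using hBsum 0 (by omega)
    | (j+1) =>
      have h1 := hBsum (j+1) hj
      have h2 := hBsum j (by omega)
      rw [Finset.sum_range_succ, Matrix.mul_add, h2, zero_add] at h1
      exact h1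
  -- deduce B^T (A^T)^j Δ = 0 for j < n
  have hAj : ∀ j : ℕ, IsUnit (A^j).det := by
    intro j; rw [Matrix.det_pow]; exact hA.pow j
  have hfin : ∀ j, j < n → Bᵀ * (Aᵀ)^j * (Q - Q') = 0 := by
    intro j hjn
    have h := hterm j (by omega)
    rw [← Matrix.mul_assoc, ← Matrix.mul_assoc] at h
    have := cancel_right (A^j) (hAj j) (Bᵀ * (Aᵀ)^j * (Q - Q')) 0 (by simpa using h)
    exact this
  -- controllability finish
  set C := (Matrix.of fun i (kj : Fin n × Fin m) => (A ^ (kj.1 : ℕ) * B) i kj.2) with hC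
  have hCinj : Function.Injective (Cᵀ).mulVecLin := by
    apply inj_of_rank
    rw [Matrix.rank_transpose, hctrb]
    simp
  have hCD : Cᵀ * (Q - Q') = Cᵀ * (0 : Matrix (Fin n) (Fin n) ℝ) := by
    rw [Matrix.mul_zero]
    ext kj l
    obtain ⟨k, j⟩ := kj
    have h := hfin (k : ℕ) k.isLt
    have := congrFun (congrFun h j) l
    simp only [Matrix.mul_apply, Matrix.zero_apply] at this ⊢
    rw [← this]
    apply Finset.sum_congr rfl
    intro i _
    simp only [hC, Matrix.of_apply, Matrix.mul_apply, Finset.sum_mul,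
      ← Matrix.transpose_pow, Matrix.transpose_apply]
    exact Finset.sum_congr rfl fun x _ => by ring
  exact sub_eq_zero.mp (left_cancel Cᵀ hCinj _ _ hCD)
end

section
/- Let $A$ be invertible, $B$ have full column rank, $P_{t+1} \succeq 0$, and $K_t = -(B^T P_{t+1} B + I)^{-1} B^T P_{t+1} A$, with $A_{cl}(t) = A + BK_t$. Then $B^T P_{t+1} A_{cl}(t) = -K_t$, and since $A_{cl}(t)$ is invertible, $B^T P_{t+1} = -K_t A_{cl}(t)^{-1}$. Consequently, if two positive semidefinite matrices $P_{t+1}$ and $P'_{t+1}$ yield the same closed-loop matrix $A_{cl}(t)$ via their respective gains, then $B^T(P_{t+1} - P'_{t+1}) = 0$. -/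
open Matrix

private lemma stmt5_aux {n m : ℕ} (A : Matrix (Fin n) (Fin n) ℝ) (B : Matrix (Fin n) (Fin m) ℝ)
    (hA : IsUnit A.det)
    (P : Matrix (Fin n) (Fin n) ℝ) (hP : P.PosSemidef)
    (K : Matrix (Fin m) (Fin n) ℝ)
    (hK : K = -(Bᵀ * P * B + 1)⁻¹ * Bᵀ * P * A) :
    Bᵀ * P * (A + B * K) = -K ∧ IsUnit (A + B * K).det ∧
      Bᵀ * P = -K * (A + B * K)⁻¹ := by
  have hBPB : (Bᵀ * P * B).PosSemidef := by
    simpa using hP.conjTranspose_mul_mul_same B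
  have hM : (Bᵀ * P * B + 1).PosDef := Matrix.PosDef.posSemidef_add hBPB Matrix.PosDef.one
  have hMdet : IsUnit (Bᵀ * P * B + 1).det := (isUnit_iff_isUnit_det _).1 hM.isUnit
  have hMM : (Bᵀ * P * B + 1) * (Bᵀ * P * B + 1)⁻¹ = 1 := mul_nonsing_inv _ hMdet
  have hMM' : (Bᵀ * P * B + 1)⁻¹ * (Bᵀ * P * B + 1) = 1 := nonsing_inv_mul _ hMdet
  have hMK : (Bᵀ * P * B + 1) * K = -(Bᵀ * P * A) := by
    rw [hK]
    simp only [Matrix.neg_mul, Matrix.mul_neg, ← Matrix.mul_assoc, hMM, Matrix.one_mul]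
  have hMK' : (Bᵀ * P * B) * K = -(Bᵀ * P * A) - K := by
    have h := hMK
    rw [Matrix.add_mul, Matrix.one_mul] at h
    exact eq_sub_of_add_eq h
  have part1 : Bᵀ * P * (A + B * K) = -K := by
    have expand : Bᵀ * P * (A + B * K) = Bᵀ * P * A + (Bᵀ * P * B) * K := by
      simp only [Matrix.mul_add, Matrix.add_mul, Matrix.sub_mul, Matrix.mul_sub, Matrix.mul_assoc, Matrix.one_mul, Matrix.mul_one, Matrix.neg_mul, Matrix.mul_neg]; try abel
    rw [expand, hMK']
    abel
  have hAinv : A * A⁻¹ = 1 := mul_nonsing_inv A hA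
  have key2 : B * (Bᵀ * P * B + 1)⁻¹ * (Bᵀ * P)
      + B * (Bᵀ * P * B + 1)⁻¹ * ((Bᵀ * P * B) * (Bᵀ * P)) = B * (Bᵀ * P) := by
    have h1 : B * ((Bᵀ * P * B + 1)⁻¹ * (Bᵀ * P * B + 1)) * (Bᵀ * P) = B * (Bᵀ * P) := by
      rw [hMM', Matrix.mul_one]
    calc B * (Bᵀ * P * B + 1)⁻¹ * (Bᵀ * P)
        + B * (Bᵀ * P * B + 1)⁻¹ * ((Bᵀ * P * B) * (Bᵀ * P))
        = B * ((Bᵀ * P * B + 1)⁻¹ * (Bᵀ * P * B + 1)) * (Bᵀ * P) := by simp only [Matrix.mul_add, Matrix.add_mul, Matrix.sub_mul, Matrix.mul_sub, Matrix.mul_assoc, Matrix.one_mul, Matrix.mul_one, Matrix.neg_mul, Matrix.mul_neg]; try abel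
      _ = B * (Bᵀ * P) := h1
  have hAc : A + B * K = (1 - B * (Bᵀ * P * B + 1)⁻¹ * (Bᵀ * P)) * A := by
    rw [hK]; simp only [Matrix.mul_add, Matrix.add_mul, Matrix.sub_mul, Matrix.mul_sub, Matrix.mul_assoc, Matrix.one_mul, Matrix.mul_one, Matrix.neg_mul, Matrix.mul_neg]; try abel
  have hRight : (A + B * K) * (A⁻¹ * (1 + B * (Bᵀ * P))) = 1 := by
    rw [hAc]
    have step : (1 - B * (Bᵀ * P * B + 1)⁻¹ * (Bᵀ * P)) * A * (A⁻¹ * (1 + B * (Bᵀ * P)))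
        = (1 - B * (Bᵀ * P * B + 1)⁻¹ * (Bᵀ * P)) * (A * A⁻¹) * (1 + B * (Bᵀ * P)) := by
      simp only [Matrix.mul_add, Matrix.add_mul, Matrix.sub_mul, Matrix.mul_sub, Matrix.mul_assoc, Matrix.one_mul, Matrix.mul_one, Matrix.neg_mul, Matrix.mul_neg]; try abel
    rw [step, hAinv, Matrix.mul_one]
    have expand2 : (1 - B * (Bᵀ * P * B + 1)⁻¹ * (Bᵀ * P)) * (1 + B * (Bᵀ * P))
        = 1 + B * (Bᵀ * P)
          - (B * (Bᵀ * P * B + 1)⁻¹ * (Bᵀ * P)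
            + B * (Bᵀ * P * B + 1)⁻¹ * ((Bᵀ * P * B) * (Bᵀ * P))) := by
      simp only [Matrix.mul_add, Matrix.add_mul, Matrix.sub_mul, Matrix.mul_sub, Matrix.mul_assoc, Matrix.one_mul, Matrix.mul_one, Matrix.neg_mul, Matrix.mul_neg]; try abel
    rw [expand2, key2]
    abel
  have hdet : IsUnit (A + B * K).det := Matrix.isUnit_det_of_right_inverse hRight
  refine ⟨part1, hdet, ?_⟩
  have h3 : (A + B * K) * (A + B * K)⁻¹ = 1 := mul_nonsing_inv _ hdet
  calc Bᵀ * P = Bᵀ * P * ((A + B * K) * (A + B * K)⁻¹) := by rw [h3, Matrix.mul_one]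
    _ = Bᵀ * P * (A + B * K) * (A + B * K)⁻¹ := by simp only [Matrix.mul_assoc]
    _ = -K * (A + B * K)⁻¹ := by rw [part1]

theorem stmt5 {n m : ℕ} (A : Matrix (Fin n) (Fin n) ℝ) (B : Matrix (Fin n) (Fin m) ℝ)
    (hA : IsUnit A.det) (hB : B.rank = m)
    (P P' : Matrix (Fin n) (Fin n) ℝ) (hP : P.PosSemidef) (hP' : P'.PosSemidef)
    (K K' : Matrix (Fin m) (Fin n) ℝ)
    (hK : K = -(Bᵀ * P * B + 1)⁻¹ * Bᵀ * P * A)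
    (hK' : K' = -(Bᵀ * P' * B + 1)⁻¹ * Bᵀ * P' * A) :
    Bᵀ * P * (A + B * K) = -K ∧
    Bᵀ * P = -K * (A + B * K)⁻¹ ∧
    (A + B * K = A + B * K' → Bᵀ * (P - P') = 0) := by
  obtain ⟨h1, hdet, h2⟩ := stmt5_aux A B hA P hP K hK
  obtain ⟨h1', hdet', h2'⟩ := stmt5_aux A B hA P' hP' K' hK'
  refine ⟨h1, h2, fun hEq => ?_⟩
  -- B has full column rank, so its kernel is trivial
  have hker : LinearMap.ker B.mulVecLin = ⊥ := by
    have h := LinearMap.finrank_range_add_finrank_ker B.mulVecLin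
    have hrange : Module.finrank ℝ (LinearMap.range B.mulVecLin) = m := hB
    rw [hrange, Module.finrank_pi] at h
    simp only [Fintype.card_fin] at h
    have : Module.finrank ℝ (LinearMap.ker B.mulVecLin) = 0 := by omega
    exact Submodule.finrank_eq_zero.mp this
  have hkerT : LinearMap.ker (Bᵀ * B).mulVecLin = ⊥ :=
    (Matrix.ker_mulVecLin_transpose_mul_self B).trans hker
  have hUnit : IsUnit (Bᵀ * B) := by
    rw [← Matrix.mulVec_injective_iff_isUnit]
    intro x y hxy
    have : (Bᵀ * B).mulVecLin x = (Bᵀ * B).mulVecLin y := hxy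
    exact LinearMap.ker_eq_bot.mp hkerT this
  have hUdet : IsUnit (Bᵀ * B).det := (isUnit_iff_isUnit_det _).1 hUnit
  have hBK : B * K = B * K' := by
    have := hEq
    rwa [add_right_inj] at this
  have hKK : K = K' := by
    have h4 : (Bᵀ * B) * K = (Bᵀ * B) * K' := by
      rw [Matrix.mul_assoc, Matrix.mul_assoc, hBK]
    calc K = (Bᵀ * B)⁻¹ * ((Bᵀ * B) * K) := by
            rw [← Matrix.mul_assoc, nonsing_inv_mul _ hUdet, Matrix.one_mul]
      _ = (Bᵀ * B)⁻¹ * ((Bᵀ * B) * K') := by rw [h4]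
      _ = K' := by rw [← Matrix.mul_assoc, nonsing_inv_mul _ hUdet, Matrix.one_mul]
  have : Bᵀ * P = Bᵀ * P' := by rw [h2, h2', hKK]
  rw [Matrix.mul_sub, this, sub_self]
end

section
/- Let $\Delta Q \in \mathbb{S}^n$ and $\Delta P_t = \sum_{k=0}^{N-1-t} (A^T)^k \Delta Q A^k$ for $t = 2, \ldots, N-1$, where $A$ is invertible. If $B^T \Delta P_t = 0$ for all $t = 2, \ldots, N-1$, then $B^T (A^T)^k \Delta Q = 0$ for all $k = 0, 1, \ldots, N-3$. -/
open Matrix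

theorem stmt7 {n m : ℕ} (A : Matrix (Fin n) (Fin n) ℝ) (B : Matrix (Fin n) (Fin m) ℝ)
    (hA : IsUnit A.det)
    (ΔQ : Matrix (Fin n) (Fin n) ℝ) (hsym : ΔQ.IsSymm) (N : ℕ) (hN : 3 ≤ N)
    (h : ∀ t, 2 ≤ t → t ≤ N - 1 →
      Bᵀ * (∑ k ∈ Finset.range (N - t), (Aᵀ) ^ k * ΔQ * A ^ k) = 0) :
    ∀ k ≤ N - 3, Bᵀ * (Aᵀ) ^ k * ΔQ = 0 := by
  intro k hk
  induction k using Nat.strong_induction_on with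
  | _ k ih =>
    have ht := h (N - 1 - k) (by omega) (by omega)
    rw [show N - (N - 1 - k) = k + 1 by omega] at ht
    rw [Matrix.mul_sum, Finset.sum_range_succ] at ht
    have hz : ∀ i ∈ Finset.range k, Bᵀ * ((Aᵀ) ^ i * ΔQ * A ^ i) = 0 := by
      intro i hi
      simp only [Finset.mem_range] at hi
      have := ih i hi (by omega)
      rw [show Bᵀ * ((Aᵀ) ^ i * ΔQ * A ^ i) = Bᵀ * (Aᵀ) ^ i * ΔQ * A ^ i by
        simp [Matrix.mul_assoc], this, Matrix.zero_mul]
    rw [Finset.sum_eq_zero hz, zero_add] at ht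
    have hkk : Bᵀ * (Aᵀ) ^ k * ΔQ * A ^ k = 0 := by
      rw [Matrix.mul_assoc, Matrix.mul_assoc, ← Matrix.mul_assoc ((Aᵀ)^k)]
      exact ht
    have hAk : IsUnit (A ^ k).det := by
      rw [Matrix.det_pow]; exact hA.pow k
    have := congrArg (· * (A ^ k)⁻¹) hkk
    simpa [Matrix.mul_assoc, Matrix.mul_nonsing_inv _ hAk] using this
end

section
/- Let $a^{(1)}, \ldots, a^{(n)} \in \mathbb{R}^n$ be linearly independent vectors, where $a^{(i)} = (a^{(i)}_1, \ldots, a^{(i)}_n)^T$. For each $i, j$, let $\bar\chi^{(i)}_j \in \mathbb{R}^{n\times n}$ be the upper-triangular Toeplitz matrix with diagonal entries $a^{(i)}_j$ and arbitrary entries $\xi^{(i)}_{j,1}, \ldots, \xi^{(i)}_{j,n-1}$ on the superdiagonals. Then the block matrix $\bar\chi \in \mathbb{R}^{n^2 \times n^2}$ with block entries $[\bar\chi]_{ij} = \bar\chi^{(i)}_j$ is nonsingular, for all choices of the $\xi^{(i)}_{j,l}$. -/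
open Matrix

theorem stmt8 {n : ℕ} (a : Fin n → Fin n → ℝ) (ha : LinearIndependent ℝ a)
    (ξ : Fin n → Fin n → ℕ → ℝ) :
    IsUnit (Matrix.of fun (ik : Fin n × Fin n) (jl : Fin n × Fin n) =>
      if ik.2 = jl.2 then a ik.1 jl.1
      else if ik.2 < jl.2 then ξ ik.1 jl.1 ((jl.2 : ℕ) - (ik.2 : ℕ))
      else (0 : ℝ)).det := by
  set M : Matrix (Fin n × Fin n) (Fin n × Fin n) ℝ :=
    Matrix.of fun (ik : Fin n × Fin n) (jl : Fin n × Fin n) =>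
      if ik.2 = jl.2 then a ik.1 jl.1
      else if ik.2 < jl.2 then ξ ik.1 jl.1 ((jl.2 : ℕ) - (ik.2 : ℕ))
      else (0 : ℝ) with hM
  have hbt : M.BlockTriangular (Prod.snd) := by
    intro p q h
    simp only [hM, Matrix.of_apply]
    rw [if_neg (by exact fun e => absurd e (by omega)), if_neg (by omega)]
  rw [hbt.det]
  refine Finset.prod_induction _ IsUnit (fun _ _ => IsUnit.mul) isUnit_one fun k _ => ?_
  let e : {p : Fin n × Fin n // p.2 = k} ≃ Fin n :=
    { toFun := fun p => p.1.1
      invFun := fun i => ⟨(i, k), rfl⟩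
      left_inv := fun p => Subtype.ext (Prod.ext rfl p.2.symm)
      right_inv := fun i => rfl }
  have hA : IsUnit (Matrix.of a) := by
    rw [← Matrix.linearIndependent_rows_iff_isUnit]
    exact ha
  have : M.toSquareBlock Prod.snd k = (Matrix.of a).submatrix e e := by
    ext p q
    have hpq : p.1.2 = q.1.2 := p.2.trans q.2.symm
    simp [Matrix.toSquareBlock, Matrix.toSquareBlockProp, hM, e, hpq]
  rw [this, Matrix.det_submatrix_equiv_self]
  exact (Matrix.isUnit_iff_isUnit_det _).mp hA
end
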